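/- Let f : ℝ^d → ℝ be twice differentiable with ρ-Lipschitz continuous Hessian, let α > 0, let u ∈ ℝ^d, and let δ be a unit vector with δᵀ∇²f(u)δ ≤ −α/2. Then for every 0 < η ≤ α/ρ, min{f(u + ηδ), f(u − ηδ)} ≤ f(u) − αη²/12. -/

import Mathlib

open scoped InnerProductSpace



theorem taylor_upper
    (f : EuclideanSpace ℝ (Fin d) → ℝ)
    (g : EuclideanSpace ℝ (Fin d) → EuclideanSpace ℝ (Fin d))
    (hess : EuclideanSpace ℝ (Fin d) →
      (EuclideanSpace ℝ (Fin d) →L[ℝ] EuclideanSpace ℝ (Fin d)))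
    (ρ : ℝ) (hρ : 0 < ρ)
    (hgrad : ∀ x, HasGradientAt f (g x) x)
    (hhess : ∀ x, HasFDerivAt g (hess x) x)
    (hhlip : ∀ x y, ‖hess x - hess y‖ ≤ ρ * ‖x - y‖)
    (u v : EuclideanSpace ℝ (Fin d)) (hv : ‖v‖ = 1)
    (η : ℝ) (hη : 0 ≤ η) :
    f (u + η • v) ≤ f u + η * ⟪v, g u⟫_ℝ + η ^ 2 / 2 * ⟪v, hess u v⟫_ℝ + ρ * η ^ 3 / 6 := by
  set c : ℝ := ⟪v, hess u v⟫_ℝ with hc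
  -- the line derivative facts
  have hline : ∀ t : ℝ, HasDerivAt (fun t : ℝ => u + t • v) v t := fun t =>
    (((hasDerivAt_id t).smul_const v).const_add u).congr_deriv (one_smul ℝ v)
  have hφ : ∀ t : ℝ, HasDerivAt (fun t : ℝ => f (u + t • v)) ⟪v, g (u + t • v)⟫_ℝ t := by
    intro t
    have h := ((hgrad (u + t • v)).hasFDerivAt).comp_hasDerivAt t (hline t)
    exact h.congr_deriv (by rw [InnerProductSpace.toDual_apply_apply, real_inner_comm])
  have hφ' : ∀ t : ℝ, HasDerivAt (fun t : ℝ => ⟪v, g (u + t • v)⟫_ℝ)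
      ⟪v, hess (u + t • v) v⟫_ℝ t := by
    intro t
    have h1 : HasFDerivAt (fun x => ⟪v, g x⟫_ℝ)
        ((innerSL ℝ v).comp (hess (u + t • v))) (u + t • v) :=
      (innerSL ℝ v).hasFDerivAt.comp _ (hhess (u + t • v))
    exact (h1.comp_hasDerivAt t (hline t)).congr_deriv rfl
  -- curvature deviation bound
  have hdev : ∀ t : ℝ, 0 ≤ t → |⟪v, hess (u + t • v) v⟫_ℝ - c| ≤ ρ * t := by
    intro t ht
    have h1 : ⟪v, hess (u + t • v) v⟫_ℝ - c = ⟪v, (hess (u + t • v) - hess u) v⟫_ℝ := by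
      simp [hc, inner_sub_right]
    rw [h1]
    calc |⟪v, (hess (u + t • v) - hess u) v⟫_ℝ|
        ≤ ‖v‖ * ‖(hess (u + t • v) - hess u) v‖ := abs_real_inner_le_norm _ _
      _ ≤ ‖v‖ * (‖hess (u + t • v) - hess u‖ * ‖v‖) := by
          gcongr; exact (hess (u + t • v) - hess u).le_opNorm v
      _ ≤ ‖v‖ * ((ρ * ‖(u + t • v) - u‖) * ‖v‖) := by gcongr; exact hhlip _ _
      _ = ρ * t := by
          simp [hv, norm_smul, abs_of_nonneg ht]
  -- first: derivative deviation bound via monotonicity of A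
  set A : ℝ → ℝ := fun t => ρ * t ^ 2 / 2 - (⟪v, g (u + t • v)⟫_ℝ - ⟪v, g u⟫_ℝ - t * c) with hA
  have hA' : ∀ t : ℝ, HasDerivAt A (ρ * t - (⟪v, hess (u + t • v) v⟫_ℝ - c)) t := by
    intro t
    have h1 : HasDerivAt (fun t : ℝ => ρ * t ^ 2 / 2) (ρ * t) t := by
      have := ((hasDerivAt_pow 2 t).const_mul ρ).div_const 2
      simpa using this.congr_deriv (by ring)
    have h2 : HasDerivAt (fun t : ℝ => ⟪v, g (u + t • v)⟫_ℝ - ⟪v, g u⟫_ℝ - t * c)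
        (⟪v, hess (u + t • v) v⟫_ℝ - c) t := by
      have := ((hφ' t).sub_const ⟪v, g u⟫_ℝ).sub ((hasDerivAt_id t).mul_const c)
      exact this.congr_deriv (by ring)
    exact h1.sub h2
  have hAmono : MonotoneOn A (Set.Icc 0 η) := by
    apply monotoneOn_of_deriv_nonneg (convex_Icc 0 η)
    · exact fun t _ => ((hA' t).continuousAt).continuousWithinAt
    · exact fun t _ => ((hA' t).differentiableAt).differentiableWithinAt
    · intro t ht
      rw [interior_Icc] at ht
      rw [(hA' t).deriv]
      have := hdev t ht.1.le
      have h2 := abs_le.mp this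
      linarith [h2.2]
  have hAnonneg : ∀ t ∈ Set.Icc (0:ℝ) η, 0 ≤ A t := by
    intro t ht
    have h0 : A 0 = 0 := by simp [hA]
    have := hAmono (Set.left_mem_Icc.mpr hη) ht ht.1
    linarith [this, h0.ge]
  -- second: function bound via monotonicity of B
  set B : ℝ → ℝ := fun t => ρ * t ^ 3 / 6 - (f (u + t • v) - f u - t * ⟪v, g u⟫_ℝ - t ^ 2 / 2 * c)
    with hB
  have hB' : ∀ t : ℝ, HasDerivAt B (A t) t := by
    intro t
    have h1 : HasDerivAt (fun t : ℝ => ρ * t ^ 3 / 6) (ρ * t ^ 2 / 2) t := by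
      have := ((hasDerivAt_pow 3 t).const_mul ρ).div_const 6
      simpa using this.congr_deriv (by ring)
    have h2 : HasDerivAt (fun t : ℝ => f (u + t • v) - f u - t * ⟪v, g u⟫_ℝ - t ^ 2 / 2 * c)
        (⟪v, g (u + t • v)⟫_ℝ - ⟪v, g u⟫_ℝ - t * c) t := by
      have h3 : HasDerivAt (fun t : ℝ => t ^ 2 / 2 * c) (t * c) t := by
        have := ((hasDerivAt_pow 2 t).div_const 2).mul_const c
        simpa using this.congr_deriv (by ring)
      have := (((hφ t).sub_const (f u)).sub ((hasDerivAt_id t).mul_const ⟪v, g u⟫_ℝ)).sub h3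
      exact this.congr_deriv (by ring)
    exact h1.sub h2
  have hBmono : MonotoneOn B (Set.Icc 0 η) := by
    apply monotoneOn_of_deriv_nonneg (convex_Icc 0 η)
    · exact fun t _ => ((hB' t).continuousAt).continuousWithinAt
    · exact fun t _ => ((hB' t).differentiableAt).differentiableWithinAt
    · intro t ht
      rw [interior_Icc] at ht
      rw [(hB' t).deriv]
      exact hAnonneg t ⟨ht.1.le, ht.2.le⟩
  have hB0 : B 0 = 0 := by simp [hB]
  have := hBmono (Set.left_mem_Icc.mpr hη) (Set.right_mem_Icc.mpr hη) hη
  rw [hB0] at this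
  simp only [hB] at this
  linarith

/-- Negative curvature exploitation: if δᵀ∇²f(u)δ ≤ −α/2 for a unit vector δ, then a
step of size η ≤ α/ρ in the direction ±δ decreases f by at least αη²/12. -/
theorem negative_curvature_step_progress
    {d : ℕ} (f : EuclideanSpace ℝ (Fin d) → ℝ)
    (g : EuclideanSpace ℝ (Fin d) → EuclideanSpace ℝ (Fin d))
    (hess : EuclideanSpace ℝ (Fin d) →
      (EuclideanSpace ℝ (Fin d) →L[ℝ] EuclideanSpace ℝ (Fin d)))
    (ρ : ℝ) (hρ : 0 < ρ)
    (hgrad : ∀ x, HasGradientAt f (g x) x)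
    (hhess : ∀ x, HasFDerivAt g (hess x) x)
    (hhlip : ∀ x y, ‖hess x - hess y‖ ≤ ρ * ‖x - y‖)
    (α : ℝ) (hα : 0 < α)
    (u δ : EuclideanSpace ℝ (Fin d)) (hδ : ‖δ‖ = 1)
    (hcurv : ⟪δ, hess u δ⟫_ℝ ≤ -α / 2) :
    ∀ η : ℝ, 0 < η → η ≤ α / ρ →
      min (f (u + η • δ)) (f (u - η • δ)) ≤ f u - α * η ^ 2 / 12 := by
  intro η hη hηρ
  have hρη : ρ * η ≤ α := by
    have := (le_div_iff₀ hρ).mp hηρ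
    linarith
  have h1 := taylor_upper f g hess ρ hρ hgrad hhess hhlip u δ hδ η hη.le
  have h2 := taylor_upper f g hess ρ hρ hgrad hhess hhlip u (-δ) (by simp [hδ]) η hη.le
  have he : u + η • (-δ) = u - η • δ := by rw [smul_neg, ← sub_eq_add_neg]
  rw [he] at h2
  have hg2 : ⟪-δ, g u⟫_ℝ = -⟪δ, g u⟫_ℝ := inner_neg_left _ _
  have hh2 : ⟪-δ, hess u (-δ)⟫_ℝ = ⟪δ, hess u δ⟫_ℝ := by
    rw [map_neg, inner_neg_neg]
  rw [hg2, hh2] at h2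
  have hmin1 : min (f (u + η • δ)) (f (u - η • δ)) ≤ f (u + η • δ) := min_le_left _ _
  have hmin2 : min (f (u + η • δ)) (f (u - η • δ)) ≤ f (u - η • δ) := min_le_right _ _
  have hcube : ρ * η ^ 3 / 6 ≤ α * η ^ 2 / 6 := by nlinarith [sq_nonneg η]
  nlinarith [sq_nonneg η]
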